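/- For every positive integer m, the graph G = K_2 ∨ (mK_1 + (K_1 ∨ 4K_1)) (a connected threshold graph, namely the one with power sequence [4,1,m,2]) has distance matrix of nullity exactly 1. -/

import Mathlib

open SimpleGraph

/-- The distance matrix of a finite simple graph, over ℚ: the `(u,v)` entry is the
graph distance between `u` and `v`. -/
noncomputable def distMatrix {V : Type*} [Fintype V] (G : SimpleGraph V) : Matrix V V ℚ :=
  fun u v => (G.dist u v : ℚ)

/-- Disjoint union of two simple graphs. -/
def gUnion {α β : Type*} (G : SimpleGraph α) (H : SimpleGraph β) : SimpleGraph (α ⊕ β) where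
  Adj x y :=
    match x, y with
    | Sum.inl a, Sum.inl b => G.Adj a b
    | Sum.inr a, Sum.inr b => H.Adj a b
    | _, _ => False
  symm := by
    constructor
    rintro (a | a) (b | b) h
    · exact h.symm
    · exact h.elim
    · exact h.elim
    · exact h.symm
  loopless := by
    constructor
    rintro (a | a) h
    · exact G.loopless.irrefl a h
    · exact H.loopless.irrefl a h

/-- Join of two simple graphs: their disjoint union together with all edges between them. -/
def gJoin {α β : Type*} (G : SimpleGraph α) (H : SimpleGraph β) : SimpleGraph (α ⊕ β) where
  Adj x y :=
    match x, y with
    | Sum.inl a, Sum.inl b => G.Adj a b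
    | Sum.inr a, Sum.inr b => H.Adj a b
    | Sum.inl _, Sum.inr _ => True
    | Sum.inr _, Sum.inl _ => True
  symm := by
    constructor
    rintro (a | a) (b | b) h
    · exact h.symm
    · trivial
    · trivial
    · exact h.symm
  loopless := by
    constructor
    rintro (a | a) h
    · exact G.loopless.irrefl a h
    · exact H.loopless.irrefl a h

abbrev Vm (m : ℕ) := Fin 2 ⊕ (Fin m ⊕ (Fin 1 ⊕ Fin 4))

def Gm (m : ℕ) : SimpleGraph (Vm m) :=
  gJoin (⊤ : SimpleGraph (Fin 2))
    (gUnion (⊥ : SimpleGraph (Fin m))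
      (gJoin (⊤ : SimpleGraph (Fin 1)) (⊥ : SimpleGraph (Fin 4))))

-- adjacency tests
lemma dist_eq_two' {V : Type*} {G : SimpleGraph V} {u v w : V} (hne : u ≠ v)
    (hadj : ¬ G.Adj u v) (h1 : G.Adj u w) (h2 : G.Adj w v) : G.dist u v = 2 := by
  have hle : G.dist u v ≤ 2 := by
    simpa using SimpleGraph.dist_le (SimpleGraph.Walk.cons h1 (SimpleGraph.Walk.cons h2 SimpleGraph.Walk.nil))
  have h0 : 0 < G.dist u v :=
    SimpleGraph.Reachable.pos_dist_of_ne
      ⟨SimpleGraph.Walk.cons h1 (SimpleGraph.Walk.cons h2 SimpleGraph.Walk.nil)⟩ hne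
  have h1' : G.dist u v ≠ 1 := fun h => hadj (SimpleGraph.dist_eq_one_iff_adj.mp h)
  omega

def Mm (m : ℕ) : Matrix (Vm m) (Vm m) ℚ :=
  fun u v =>
  match u, v with
  | Sum.inl i, Sum.inl j => if i = j then 0 else 1
  | Sum.inl _, Sum.inr _ => 1
  | Sum.inr _, Sum.inl _ => 1
  | Sum.inr (Sum.inl i), Sum.inr (Sum.inl j) => if i = j then 0 else 2
  | Sum.inr (Sum.inl _), Sum.inr (Sum.inr _) => 2
  | Sum.inr (Sum.inr _), Sum.inr (Sum.inl _) => 2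
  | Sum.inr (Sum.inr (Sum.inl _)), Sum.inr (Sum.inr (Sum.inl _)) => 0
  | Sum.inr (Sum.inr (Sum.inl _)), Sum.inr (Sum.inr (Sum.inr _)) => 1
  | Sum.inr (Sum.inr (Sum.inr _)), Sum.inr (Sum.inr (Sum.inl _)) => 1
  | Sum.inr (Sum.inr (Sum.inr i)), Sum.inr (Sum.inr (Sum.inr j)) => if i = j then 0 else 2

lemma distM (m : ℕ) : distMatrix (Gm m) = Mm m := by
  have hA1 : ∀ x : Fin m ⊕ (Fin 1 ⊕ Fin 4), ∀ i : Fin 2,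
      (Gm m).dist (Sum.inl i) (Sum.inr x) = 1 :=
    fun x i => SimpleGraph.dist_eq_one_iff_adj.mpr trivial
  have hA2 : ∀ x : Fin m ⊕ (Fin 1 ⊕ Fin 4), ∀ i : Fin 2,
      (Gm m).dist (Sum.inr x) (Sum.inl i) = 1 :=
    fun x i => SimpleGraph.dist_eq_one_iff_adj.mpr trivial
  funext u v
  rcases u with i | x
  · rcases v with i' | x'
    · by_cases h : i = i'
      · subst h; simp [distMatrix, Mm, SimpleGraph.dist_self]
      · have : (Gm m).dist (Sum.inl i) (Sum.inl i') = 1 := SimpleGraph.dist_eq_one_iff_adj.mpr h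
        simp [distMatrix, Mm, this, h]
    · rcases x' with k' | c' | j' <;> simp [distMatrix, Mm, hA1]
  · rcases v with i' | x'
    · rcases x with k | c | j <;> simp [distMatrix, Mm, hA2]
    · rcases x with k | c | j <;> rcases x' with k' | c' | j'
      · -- B B
        by_cases h : k = k'
        · subst h; simp [distMatrix, Mm, SimpleGraph.dist_self]
        · have hne : (Sum.inr (Sum.inl k) : Vm m) ≠ Sum.inr (Sum.inl k') := by simp [h]
          have : (Gm m).dist (Sum.inr (Sum.inl k)) (Sum.inr (Sum.inl k')) = 2 :=
            dist_eq_two' hne (fun h => h) (w := Sum.inl 0) trivial trivial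
          simp [distMatrix, Mm, this, h]
      · -- B C
        have : (Gm m).dist (Sum.inr (Sum.inl k)) (Sum.inr (Sum.inr (Sum.inl c'))) = 2 :=
          dist_eq_two' (by simp) (fun h => h) (w := Sum.inl 0) trivial trivial
        simp [distMatrix, Mm, this]
      · -- B D
        have : (Gm m).dist (Sum.inr (Sum.inl k)) (Sum.inr (Sum.inr (Sum.inr j'))) = 2 :=
          dist_eq_two' (by simp) (fun h => h) (w := Sum.inl 0) trivial trivial
        simp [distMatrix, Mm, this]
      · -- C B
        have : (Gm m).dist (Sum.inr (Sum.inr (Sum.inl c))) (Sum.inr (Sum.inl k')) = 2 :=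
          dist_eq_two' (by simp) (fun h => h) (w := Sum.inl 0) trivial trivial
        simp [distMatrix, Mm, this]
      · -- C C
        have : c = c' := Subsingleton.elim _ _
        subst this; simp [distMatrix, Mm, SimpleGraph.dist_self]
      · -- C D
        have : (Gm m).dist (Sum.inr (Sum.inr (Sum.inl c))) (Sum.inr (Sum.inr (Sum.inr j'))) = 1 :=
          SimpleGraph.dist_eq_one_iff_adj.mpr trivial
        simp [distMatrix, Mm, this]
      · -- D B
        have : (Gm m).dist (Sum.inr (Sum.inr (Sum.inr j))) (Sum.inr (Sum.inl k')) = 2 :=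
          dist_eq_two' (by simp) (fun h => h) (w := Sum.inl 0) trivial trivial
        simp [distMatrix, Mm, this]
      · -- D C
        have : (Gm m).dist (Sum.inr (Sum.inr (Sum.inr j))) (Sum.inr (Sum.inr (Sum.inl c'))) = 1 :=
          SimpleGraph.dist_eq_one_iff_adj.mpr trivial
        simp [distMatrix, Mm, this]
      · -- D D
        by_cases h : j = j'
        · subst h; simp [distMatrix, Mm, SimpleGraph.dist_self]
        · have : (Gm m).dist (Sum.inr (Sum.inr (Sum.inr j))) (Sum.inr (Sum.inr (Sum.inr j'))) = 2 :=
            dist_eq_two' (by simp [h]) (fun hh => (hh : False).elim) (w := Sum.inl 0) trivial trivial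
          simp [distMatrix, Mm, this, h]

def wv (m : ℕ) : Vm m → ℚ
  | Sum.inl _ => 2
  | Sum.inr (Sum.inl _) => 0
  | Sum.inr (Sum.inr (Sum.inl _)) => 2
  | Sum.inr (Sum.inr (Sum.inr _)) => -1

lemma wv_mem (m : ℕ) : (Mm m).mulVec (wv m) = 0 := by
  funext u
  rcases u with i | k | c | j
  · fin_cases i <;>
      simp [Matrix.mulVec, dotProduct, Fintype.sum_sum_type, Mm, wv,
        Fin.sum_univ_two, Fin.sum_univ_four] <;> norm_num
  · simp [Matrix.mulVec, dotProduct, Fintype.sum_sum_type, Mm, wv,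
      Fin.sum_univ_two, Fin.sum_univ_four] <;> norm_num
  · simp [Matrix.mulVec, dotProduct, Fintype.sum_sum_type, Mm, wv,
      Fin.sum_univ_two, Fin.sum_univ_four] <;> norm_num
  · fin_cases j <;>
      simp [Matrix.mulVec, dotProduct, Fintype.sum_sum_type, Mm, wv,
        Fin.sum_univ_two, Fin.sum_univ_four] <;> norm_num

lemma ker_le (m : ℕ) (hm : 1 ≤ m) (x : Vm m → ℚ) (hx : (Mm m).mulVec x = 0) :
    x ∈ Submodule.span ℚ {wv m} := by
  have E : ∀ u, ∑ v, Mm m u v * x v = 0 := by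
    intro u
    have := congrFun hx u
    simpa [Matrix.mulVec, dotProduct] using this
  have E0 := E (Sum.inl 0)
  have E1 := E (Sum.inl 1)
  have Ec := E (Sum.inr (Sum.inr (Sum.inl 0)))
  have Ed0 := E (Sum.inr (Sum.inr (Sum.inr 0)))
  have Ed1 := E (Sum.inr (Sum.inr (Sum.inr 1)))
  have Ed2 := E (Sum.inr (Sum.inr (Sum.inr 2)))
  have Ed3 := E (Sum.inr (Sum.inr (Sum.inr 3)))
  simp [Fintype.sum_sum_type, Mm, Fin.sum_univ_two, Fin.sum_univ_four, ← Finset.mul_sum] at E0 E1 Ec Ed0 Ed1 Ed2 Ed3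
  -- clean up the b-row equations
  have hsum : ∀ k : Fin m, (∑ j, if k = j then (0:ℚ) else 2 * x (Sum.inr (Sum.inl j))) =
      2 * (∑ j, x (Sum.inr (Sum.inl j))) - 2 * x (Sum.inr (Sum.inl k)) := by
    intro k
    have h1 : ∀ j ∈ Finset.univ, (if k = j then (0:ℚ) else 2 * x (Sum.inr (Sum.inl j))) =
        2 * x (Sum.inr (Sum.inl j)) - (if k = j then 2 * x (Sum.inr (Sum.inl j)) else 0) := by
      intro j _; split <;> ring
    rw [Finset.sum_congr rfl h1, Finset.sum_sub_distrib, Finset.sum_ite_eq]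
    simp [Finset.mul_sum]
  have hb : ∀ k : Fin m, x (Sum.inr (Sum.inl k)) = 0 := by
    intro k
    have Eb := E (Sum.inr (Sum.inl k))
    simp [Fintype.sum_sum_type, Mm, Fin.sum_univ_two, Fin.sum_univ_four] at Eb
    rw [hsum k] at Eb
    linarith
  have hS : (∑ j : Fin m, x (Sum.inr (Sum.inl j))) = 0 :=
    Finset.sum_eq_zero fun k _ => hb k
  rw [Submodule.mem_span_singleton]
  refine ⟨x (Sum.inl 0) / 2, ?_⟩
  funext u
  rcases u with i | k | c | j
  · fin_cases i <;> simp [wv] <;> linarith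
  · simp [wv, hb k]
  · fin_cases c <;> simp [wv] <;> linarith
  · fin_cases j <;> simp [wv] <;> linarith

lemma wv_ne_zero (m : ℕ) : wv m ≠ 0 := by
  intro h
  have := congrFun h (Sum.inl 0)
  simp [wv] at this

lemma rank_Mm (m : ℕ) (hm : 1 ≤ m) : (Mm m).rank = m + 6 := by
  have hspan : LinearMap.ker (Mm m).mulVecLin = Submodule.span ℚ {wv m} := by
    apply le_antisymm
    · intro x hx
      exact ker_le m hm x (by simpa [Matrix.mulVecLin_apply] using hx)
    · rw [Submodule.span_le, Set.singleton_subset_iff]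
      simp only [SetLike.mem_coe, LinearMap.mem_ker, Matrix.mulVecLin_apply]
      exact wv_mem m
  have hker : Module.finrank ℚ (LinearMap.ker (Mm m).mulVecLin) = 1 := by
    rw [hspan]
    exact finrank_span_singleton (wv_ne_zero m)
  have hrn := LinearMap.finrank_range_add_finrank_ker (Mm m).mulVecLin
  rw [hker] at hrn
  have hfin : Module.finrank ℚ (Vm m → ℚ) = m + 7 := by
    rw [Module.finrank_pi]
    simp [Vm]
    omega
  rw [hfin] at hrn
  have : (Mm m).rank = Module.finrank ℚ (LinearMap.range (Mm m).mulVecLin) := rfl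
  omega


/-- For every positive integer m, the connected threshold graph
K₂ ∨ (mK₁ + (K₁ ∨ 4K₁)) (power sequence [4,1,m,2]) has distance matrix of nullity
exactly 1. -/
theorem threshold_family_nullity_one (m : ℕ) (hm : 1 ≤ m) :
    Fintype.card (Fin 2 ⊕ (Fin m ⊕ (Fin 1 ⊕ Fin 4))) -
      (distMatrix (gJoin (⊤ : SimpleGraph (Fin 2))
        (gUnion (⊥ : SimpleGraph (Fin m))
          (gJoin (⊤ : SimpleGraph (Fin 1)) (⊥ : SimpleGraph (Fin 4)))))).rank = 1 := by
  have h1 : distMatrix (gJoin (⊤ : SimpleGraph (Fin 2))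
      (gUnion (⊥ : SimpleGraph (Fin m))
        (gJoin (⊤ : SimpleGraph (Fin 1)) (⊥ : SimpleGraph (Fin 4))))) = Mm m := distM m
  rw [h1, rank_Mm m hm]
  have hcard : Fintype.card (Fin 2 ⊕ (Fin m ⊕ (Fin 1 ⊕ Fin 4))) = m + 7 := by
    simp
    omega
  rw [hcard]
  omega
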